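/- Suppose for every edge e ∈ E that (1/(4m))·(1 + 1/(4c_e))^(paths_t(e)) ≤ 3, where m = |E| ≥ 1 and c_e ≥ 1. Then the load of every edge, load_t(e) = paths_t(e)/c_e, is at most 4·log₂(12m). -/

import Mathlib

/-- `2^x ≤ 1 + x` for `x ∈ [0,1]`, by convexity of `exp`. -/
lemma two_rpow_le_one_add' {x : ℝ} (h0 : 0 ≤ x) (h1 : x ≤ 1) :
    (2 : ℝ) ^ x ≤ 1 + x := by
  have := rpow_one_add_le_one_add_mul_self (s := 1) (by norm_num) h0 h1
  norm_num at this
  linarith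

/-- If `(1/(4m)) (1 + 1/(4 c e))^(paths e) ≤ 3` for every edge `e`, with
`m = |E| ≥ 1` and `c e ≥ 1`, then the load `paths e / c e` of every edge is at most
`4 log₂(12 m)`. -/
theorem stmt_11 {E : Type*} [Fintype E] (hE : 1 ≤ Fintype.card E)
    (c : E → ℝ) (hc : ∀ e, 1 ≤ c e) (paths : E → ℕ)
    (h : ∀ e, (1 / (4 * (Fintype.card E : ℝ))) * (1 + 1 / (4 * c e)) ^ (paths e) ≤ 3) :
    ∀ e, (paths e : ℝ) / c e ≤ 4 * Real.logb 2 (12 * (Fintype.card E : ℝ)) := by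
  intro e
  set m : ℝ := (Fintype.card E : ℝ) with hm
  have hm1 : (1 : ℝ) ≤ m := by rw [hm]; exact_mod_cast hE
  have hce : (1 : ℝ) ≤ c e := hc e
  have hcpos : (0 : ℝ) < c e := by linarith
  set x : ℝ := 1 / (4 * c e) with hx
  have hx0 : 0 < x := by positivity
  have hx1 : x ≤ 1 := by
    rw [hx, div_le_one (by positivity)]; linarith
  -- (1+x)^p ≤ 12 m
  have hkey : (1 + x) ^ (paths e) ≤ 12 * m := by
    have := h e
    have h4m : (0 : ℝ) < 4 * m := by linarith
    rw [one_div, inv_mul_le_iff₀ h4m] at this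
    linarith
  -- 2^(x * p) ≤ 12 m
  have h2 : (2 : ℝ) ^ (x * (paths e : ℝ)) ≤ 12 * m := by
    have hstep : ((2 : ℝ) ^ x) ^ (paths e) ≤ (1 + x) ^ (paths e) :=
      pow_le_pow_left₀ (Real.rpow_nonneg (by norm_num) x)
        (two_rpow_le_one_add' hx0.le hx1) _
    calc (2 : ℝ) ^ (x * (paths e : ℝ)) = ((2 : ℝ) ^ x) ^ (paths e) := by
          rw [← Real.rpow_natCast ((2:ℝ)^x), ← Real.rpow_mul (by norm_num)]
      _ ≤ (1 + x) ^ (paths e) := hstep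
      _ ≤ 12 * m := hkey
  -- take logb
  have hlog : x * (paths e : ℝ) ≤ Real.logb 2 (12 * m) := by
    have := Real.logb_le_logb_of_le (b := 2) (by norm_num) (Real.rpow_pos_of_pos (by norm_num) _) h2
    rwa [Real.logb_rpow (by norm_num) (by norm_num)] at this
  have : (paths e : ℝ) / c e = 4 * (x * (paths e : ℝ)) := by
    field_simp [hx]; rw [hx]; field_simp
  rw [this]
  linarith
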